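/- Local average spillover effect under one-sided noncompliance: under Assumptions 1, 2 and 4, if P[C_j] > 0 then E[Y(0,1) − Y(0,0) | C_j] = (E[Y | Z_i=0, Z_j=1] − E[Y | Z_i=0, Z_j=0]) / E[D_j | Z_i=0, Z_j=1]. -/

import Mathlib

open MeasureTheory ProbabilityTheory

noncomputable def bInd (b : Bool) : ℝ := if b then 1 else 0

lemma cond_integral_eq {Ω : Type*} [MeasurableSpace Ω] (P : Measure Ω)
    {X : Ω → ℝ} {A : Set Ω} (mA : MeasurableSet A) :
    ∫ ω, X ω ∂(P[|A]) = (P A).toReal⁻¹ * ∫ ω, A.indicator X ω ∂P := by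
  rw [ProbabilityTheory.cond, integral_smul_measure, integral_indicator mA,
    ENNReal.toReal_inv, smul_eq_mul]

lemma indep_indicator_integral {Ω : Type*} [MeasurableSpace Ω] (P : Measure Ω)
    [IsProbabilityMeasure P] {X : Ω → ℝ} {Z : Ω → Bool × Bool}
    (hXint : Integrable X P) (hZ : Measurable Z) (hind : IndepFun X Z P)
    (z : Bool × Bool) :
    ∫ ω, (Z ⁻¹' {z}).indicator X ω ∂P = (P (Z ⁻¹' {z})).toReal * ∫ ω, X ω ∂P := by
  set A := Z ⁻¹' {z} with hA
  have mA : MeasurableSet A := hZ (measurableSet_singleton z)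
  have hInd2 : IndepFun X (fun ω => A.indicator (fun _ => (1 : ℝ)) ω) P := by
    have heq : (fun ω => A.indicator (fun _ => (1 : ℝ)) ω)
        = (fun p : Bool × Bool => if p = z then (1 : ℝ) else 0) ∘ Z := by
      funext ω
      by_cases h : Z ω = z <;> simp [Set.indicator, hA, h]
    rw [heq]
    exact hind.comp measurable_id (measurable_of_countable _)
  have hIint : Integrable (fun ω => A.indicator (fun _ => (1 : ℝ)) ω) P :=
    (integrable_const (1 : ℝ)).indicator mA
  have hmul := hInd2.integral_mul_eq_mul_integral hXint.1 hIint.1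
  have hXI : (fun ω => X ω * A.indicator (fun _ => (1 : ℝ)) ω) = A.indicator X := by
    funext ω
    by_cases h : ω ∈ A <;> simp [Set.indicator, h]
  have hI1 : ∫ ω, A.indicator (fun _ => (1 : ℝ)) ω ∂P = (P A).toReal := by
    rw [integral_indicator_const (1 : ℝ) mA, smul_eq_mul, mul_one, measureReal_def]
  calc ∫ ω, A.indicator X ω ∂P = ∫ ω, X ω * A.indicator (fun _ => (1 : ℝ)) ω ∂P := by
        rw [hXI]
    _ = (∫ ω, X ω ∂P) * ∫ ω, A.indicator (fun _ => (1 : ℝ)) ω ∂P := hmul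
    _ = (P A).toReal * ∫ ω, X ω ∂P := by rw [hI1, mul_comm]

theorem stmt_10
    {Ω : Type*} [MeasurableSpace Ω] (P : Measure Ω) [IsProbabilityMeasure P]
    (Y : Bool → Bool → Ω → ℝ) (Di Dj : Bool → Bool → Ω → Bool)
    (Zi Zj : Ω → Bool)
    (hYmeas : ∀ d d', Measurable (Y d d'))
    (hYint : ∀ d d', Integrable (Y d d') P)
    (hDimeas : ∀ z z', Measurable (Di z z'))
    (hDjmeas : ∀ z z', Measurable (Dj z z'))
    (hZi : Measurable Zi) (hZj : Measurable Zj)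
    (hpos : ∀ z z', 0 < P ({x | Zi x = z} ∩ {x | Zj x = z'}))
    (hIV : IndepFun
      (fun ω => ((fun d d' => Y d d' ω),
                 (fun z z' => Di z z' ω),
                 (fun z z' => Dj z z' ω)))
      (fun ω => (Zi ω, Zj ω)) P)
    (hmono : ∀ᵐ ω ∂P,
      (Di false false ω ≤ Di false true ω ∧ Di false true ω ≤ Di true false ω ∧
        Di true false ω ≤ Di true true ω) ∧
      (Dj false false ω ≤ Dj false true ω ∧ Dj false true ω ≤ Dj true false ω ∧
        Dj true false ω ≤ Dj true true ω))
    (hosn : ∀ᵐ ω ∂P,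
      Di false false ω = false ∧ Di false true ω = false ∧
      Dj false false ω = false ∧ Dj false true ω = false)
    (hC : 0 < P ({x | Dj true false x = true ∧ Dj false true x = false}))
    :
    (∫ ω, (Y false true ω - Y false false ω) ∂(P[|{x | Dj true false x = true ∧ Dj false true x = false}]))
    = ((∫ ω, (Y (Di (Zi ω) (Zj ω) ω) (Dj (Zj ω) (Zi ω) ω) ω) ∂(P[|({x | Zi x = false} ∩ {x | Zj x = true})])) - (∫ ω, (Y (Di (Zi ω) (Zj ω) ω) (Dj (Zj ω) (Zi ω) ω) ω) ∂(P[|({x | Zi x = false} ∩ {x | Zj x = false})])))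
      / (∫ ω, bInd (Dj (Zj ω) (Zi ω) ω) ∂(P[|({x | Zi x = false} ∩ {x | Zj x = true})])) := by
  classical
  set S : Set Ω := {ω | Dj true false ω = true} with hS
  set C : Set Ω := {x | Dj true false x = true ∧ Dj false true x = false} with hCdef
  have mS : MeasurableSet S := hDjmeas true false (measurableSet_singleton true)
  have mC : MeasurableSet C := by
    have : C = S ∩ {ω | Dj false true ω = false} := by
      ext ω; simp [hCdef, hS]
    rw [this]
    exact mS.inter (hDjmeas false true (measurableSet_singleton false))
  set Zp : Ω → Bool × Bool := fun ω => (Zi ω, Zj ω) with hZp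
  have hZpm : Measurable Zp := hZi.prodMk hZj
  have hA01 : ({x | Zi x = false} ∩ {x | Zj x = true}) = Zp ⁻¹' {(false, true)} := by
    ext ω; simp [hZp, Prod.ext_iff, Set.mem_setOf_eq]
  have hA00 : ({x | Zi x = false} ∩ {x | Zj x = false}) = Zp ⁻¹' {(false, false)} := by
    ext ω; simp [hZp, Prod.ext_iff, Set.mem_setOf_eq]
  have mA01 : MeasurableSet (Zp ⁻¹' {(false, true)}) := hZpm (measurableSet_singleton _)
  have mA00 : MeasurableSet (Zp ⁻¹' {(false, false)}) := hZpm (measurableSet_singleton _)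
  -- nice versions of the observed quantities
  set X1 : Ω → ℝ := fun ω => if Dj true false ω then Y false true ω else Y false false ω
    with hX1
  set X0 : Ω → ℝ := Y false false with hX0
  set XD : Ω → ℝ := fun ω => bInd (Dj true false ω) with hXD
  have hX1eq : X1 = fun ω => S.indicator (Y false true) ω + Sᶜ.indicator (Y false false) ω := by
    funext ω
    by_cases h : Dj true false ω = true <;> simp [hX1, hX0, hS, Set.indicator, h]
  have hX1int : Integrable X1 P := by
    rw [hX1eq]
    exact ((hYint false true).indicator mS).add ((hYint false false).indicator mS.compl)
  have hXDeq : XD = S.indicator (fun _ => (1 : ℝ)) := by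
    funext ω
    by_cases h : Dj true false ω = true <;> simp [hXD, hS, bInd, Set.indicator, h]
  have hXDint : Integrable XD P := by
    rw [hXDeq]; exact (integrable_const (1 : ℝ)).indicator mS
  -- independence of the nice versions from the instruments
  have hIndX1 : IndepFun X1 Zp P := by
    have hb : Measurable fun p : (Bool → Bool → ℝ) × (Bool → Bool → Bool) × (Bool → Bool → Bool)
        => p.2.2 true false :=
      (measurable_pi_apply false).comp ((measurable_pi_apply true).comp
        (measurable_snd.comp measurable_snd))
    have h1 : Measurable fun p : (Bool → Bool → ℝ) × (Bool → Bool → Bool) × (Bool → Bool → Bool)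
        => p.1 false true :=
      (measurable_pi_apply true).comp ((measurable_pi_apply false).comp measurable_fst)
    have h0 : Measurable fun p : (Bool → Bool → ℝ) × (Bool → Bool → Bool) × (Bool → Bool → Bool)
        => p.1 false false :=
      (measurable_pi_apply false).comp ((measurable_pi_apply false).comp measurable_fst)
    have hg : Measurable fun p : (Bool → Bool → ℝ) × (Bool → Bool → Bool) × (Bool → Bool → Bool)
        => if p.2.2 true false then p.1 false true else p.1 false false :=
      Measurable.ite (hb (measurableSet_singleton true)) h1 h0
    exact hIV.comp hg measurable_id
  have hIndX0 : IndepFun X0 Zp P := by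
    have h0 : Measurable fun p : (Bool → Bool → ℝ) × (Bool → Bool → Bool) × (Bool → Bool → Bool)
        => p.1 false false :=
      (measurable_pi_apply false).comp ((measurable_pi_apply false).comp measurable_fst)
    exact hIV.comp h0 measurable_id
  have hIndXD : IndepFun XD Zp P := by
    have hb : Measurable fun p : (Bool → Bool → ℝ) × (Bool → Bool → Bool) × (Bool → Bool → Bool)
        => p.2.2 true false :=
      (measurable_pi_apply false).comp ((measurable_pi_apply true).comp
        (measurable_snd.comp measurable_snd))
    have hg : Measurable fun p : (Bool → Bool → ℝ) × (Bool → Bool → Bool) × (Bool → Bool → Bool)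
        => bInd (p.2.2 true false) := (measurable_of_countable bInd).comp hb
    exact hIV.comp hg measurable_id
  have hP01 : (P (Zp ⁻¹' {(false, true)})).toReal ≠ 0 :=
    ENNReal.toReal_ne_zero.mpr ⟨(hA01 ▸ (hpos false true)).ne', measure_ne_top _ _⟩
  have hP00 : (P (Zp ⁻¹' {(false, false)})).toReal ≠ 0 :=
    ENNReal.toReal_ne_zero.mpr ⟨(hA00 ▸ (hpos false false)).ne', measure_ne_top _ _⟩
  -- conditional integral of a function a.e.-equal on the event to an independent one
  have key : ∀ (f X : Ω → ℝ) (z : Bool × Bool), Integrable X P → IndepFun X Zp P →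
      (P (Zp ⁻¹' {z})).toReal ≠ 0 →
      ((Zp ⁻¹' {z}).indicator f =ᵐ[P] (Zp ⁻¹' {z}).indicator X) →
      ∫ ω, f ω ∂(P[|Zp ⁻¹' {z}]) = ∫ ω, X ω ∂P := by
    intro f X z hXint hind hne hae
    have mA : MeasurableSet (Zp ⁻¹' {z}) := hZpm (measurableSet_singleton z)
    rw [cond_integral_eq P mA, integral_congr_ae hae,
      indep_indicator_integral P hXint hZpm hind z, ← mul_assoc, inv_mul_cancel₀ hne, one_mul]
  -- the three conditional integrals
  have hE1 : ∫ ω, (Y (Di (Zi ω) (Zj ω) ω) (Dj (Zj ω) (Zi ω) ω) ω)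
      ∂(P[|({x | Zi x = false} ∩ {x | Zj x = true})]) = ∫ ω, X1 ω ∂P := by
    rw [hA01]
    refine key _ X1 (false, true) hX1int hIndX1 hP01 ?_
    filter_upwards [hosn] with ω hω
    by_cases h : ω ∈ Zp ⁻¹' {(false, true)}
    · have hzi : Zi ω = false := congrArg Prod.fst (Set.mem_singleton_iff.mp h)
      have hzj : Zj ω = true := congrArg Prod.snd (Set.mem_singleton_iff.mp h)
      rw [Set.indicator_of_mem h, Set.indicator_of_mem h, hzi, hzj, hω.2.1]
      by_cases hd : Dj true false ω = true <;> simp [hX1, hX0, hd]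
    · rw [Set.indicator_of_notMem h, Set.indicator_of_notMem h]
  have hE0 : ∫ ω, (Y (Di (Zi ω) (Zj ω) ω) (Dj (Zj ω) (Zi ω) ω) ω)
      ∂(P[|({x | Zi x = false} ∩ {x | Zj x = false})]) = ∫ ω, X0 ω ∂P := by
    rw [hA00]
    refine key _ X0 (false, false) (hYint false false) hIndX0 hP00 ?_
    filter_upwards [hosn] with ω hω
    by_cases h : ω ∈ Zp ⁻¹' {(false, false)}
    · have hzi : Zi ω = false := congrArg Prod.fst (Set.mem_singleton_iff.mp h)
      have hzj : Zj ω = false := congrArg Prod.snd (Set.mem_singleton_iff.mp h)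
      rw [Set.indicator_of_mem h, Set.indicator_of_mem h, hzi, hzj, hω.1, hω.2.2.1]
    · rw [Set.indicator_of_notMem h, Set.indicator_of_notMem h]
  have hED : ∫ ω, bInd (Dj (Zj ω) (Zi ω) ω)
      ∂(P[|({x | Zi x = false} ∩ {x | Zj x = true})]) = (P S).toReal := by
    rw [hA01]
    have hXDval : ∫ ω, XD ω ∂P = (P S).toReal := by
      rw [hXDeq, integral_indicator_const (1 : ℝ) mS, smul_eq_mul, mul_one, measureReal_def]
    rw [← hXDval]
    refine key _ XD (false, true) hXDint hIndXD hP01 ?_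
    filter_upwards with ω
    by_cases h : ω ∈ Zp ⁻¹' {(false, true)}
    · have hzi : Zi ω = false := congrArg Prod.fst (Set.mem_singleton_iff.mp h)
      have hzj : Zj ω = true := congrArg Prod.snd (Set.mem_singleton_iff.mp h)
      rw [Set.indicator_of_mem h, Set.indicator_of_mem h, hzi, hzj]
    · rw [Set.indicator_of_notMem h, Set.indicator_of_notMem h]
  -- C and S agree almost everywhere
  have hCS : C =ᵐ[P] S := by
    rw [Filter.eventuallyEq_set]
    filter_upwards [hosn] with ω hω
    simp [hCdef, hS, hω.2.2.2]
  have hPCS : P C = P S := measure_congr hCS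
  -- the numerator identity
  have hNum : (∫ ω, X1 ω ∂P) - (∫ ω, X0 ω ∂P)
      = ∫ ω, S.indicator (fun ω => Y false true ω - Y false false ω) ω ∂P := by
    rw [← integral_sub hX1int (hYint false false)]
    congr 1
    funext ω
    by_cases h : Dj true false ω = true <;>
      simp [hX1, hX0, hS, Set.indicator, h]
  -- left-hand side
  have hLHS : (∫ ω, (Y false true ω - Y false false ω) ∂(P[|C]))
      = (P S).toReal⁻¹ *
        ∫ ω, S.indicator (fun ω => Y false true ω - Y false false ω) ω ∂P := by
    rw [cond_integral_eq P mC, hPCS]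
    congr 1
    exact integral_congr_ae (indicator_ae_eq_of_ae_eq_set hCS)
  rw [hE1, hE0, hED, hNum, hLHS, inv_mul_eq_div]
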